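/- Let a > 0 and let A be an m×n matrix with non-negative entries whose column sums all equal a. Then var(A) < a if and only if for every pair of columns k, l there exists a row index j such that both the (j,k) and (j,l) entries of A are positive. -/

import Mathlib

open Matrix Filter Topology

/-- The column variation of a real matrix: half the maximum ℓ¹-distance
between two columns. -/
noncomputable def var {m n : ℕ} (A : Matrix (Fin m) (Fin n) ℝ) : ℝ :=
  (1/2) * ⨆ j : Fin n, ⨆ k : Fin n, ∑ i, |A i j - A i k|

theorem stmt9 {m n : ℕ} (a : ℝ) (ha : 0 < a) (A : Matrix (Fin m) (Fin n) ℝ)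
    (hpos : ∀ i j, 0 ≤ A i j) (hA : ∀ k, ∑ i, A i k = a) :
    var A < a ↔ ∀ k l : Fin n, ∃ j : Fin m, 0 < A j k ∧ 0 < A j l := by
  rcases Nat.eq_zero_or_pos n with hn | hn
  · subst hn
    constructor
    · intro _ k; exact k.elim0
    · intro _
      have : (⨆ j : Fin 0, ⨆ k : Fin 0, ∑ i, |A i j - A i k|) = 0 :=
        Real.iSup_of_isEmpty _
      simp only [var, this]
      linarith
  rcases Nat.eq_zero_or_pos m with hm | hm
  · exfalso
    have h0 := hA ⟨0, hn⟩
    subst hm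
    simp at h0
    linarith
  have hne : Nonempty (Fin n) := ⟨⟨0, hn⟩⟩
  set S : Fin n → Fin n → ℝ := fun j k => ∑ i, |A i j - A i k| with hSdef
  have hSle : ∀ j k, S j k ≤ 2 * a := by
    intro j k
    calc S j k ≤ ∑ i, (A i j + A i k) := by
          refine Finset.sum_le_sum fun i _ => ?_
          have := abs_sub (A i j) (A i k)
          rwa [abs_of_nonneg (hpos i j), abs_of_nonneg (hpos i k)] at this
      _ = 2 * a := by
          rw [Finset.sum_add_distrib, hA j, hA k]; ring
  have hTdef : var A = (1/2) * ⨆ j, ⨆ k, S j k := rfl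
  constructor
  · intro h k l
    by_contra hno
    push_neg at hno
    have hSkl : S k l = 2 * a := by
      have : S k l = ∑ i, (A i k + A i l) := by
        refine Finset.sum_congr rfl fun i _ => ?_
        rcases lt_or_ge 0 (A i k) with hk | hk
        · have hl : A i l = 0 := le_antisymm (hno i hk) (hpos i l)
          rw [hl]; simp [abs_of_nonneg (hpos i k)]
        · have hk0 : A i k = 0 := le_antisymm hk (hpos i k)
          rw [hk0]; simp [abs_of_nonneg (hpos i l)]
      rw [this, Finset.sum_add_distrib, hA k, hA l]; ring
    have h1 : S k l ≤ ⨆ k', S k k' :=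
      le_ciSup (Set.finite_range _).bddAbove l
    have h2 : (⨆ k', S k k') ≤ ⨆ j, ⨆ k', S j k' :=
      le_ciSup (f := fun j => ⨆ k', S j k') (Set.finite_range _).bddAbove k
    rw [hTdef] at h
    linarith
  · intro h
    obtain ⟨p, hp⟩ := Finite.exists_max (fun p : Fin n × Fin n => S p.1 p.2)
    have hTle : (⨆ j, ⨆ k, S j k) ≤ S p.1 p.2 :=
      ciSup_le fun j => ciSup_le fun k => hp (j, k)
    have hstrict : S p.1 p.2 < 2 * a := by
      obtain ⟨i0, hi1, hi2⟩ := h p.1 p.2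
      calc S p.1 p.2 < ∑ i, (A i p.1 + A i p.2) := by
            refine Finset.sum_lt_sum (fun i _ => ?_) ⟨i0, Finset.mem_univ i0, ?_⟩
            · have := abs_sub (A i p.1) (A i p.2)
              rwa [abs_of_nonneg (hpos i p.1), abs_of_nonneg (hpos i p.2)] at this
            · exact abs_sub_lt_iff.mpr ⟨by linarith, by linarith⟩
        _ = 2 * a := by rw [Finset.sum_add_distrib, hA p.1, hA p.2]; ring
    rw [hTdef]
    linarith
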